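/- (K^# is strictly more expressive than graded modal logic.) There is no graded modal logic formula χ such that for every finite pointed labeled graph (G,u): (G,u) satisfies χ if and only if the number of successors of u satisfying p is at least the number of successors of u satisfying q. Hence no graded modal formula is equivalent to the K^# formula #p − #q ≥ 0. -/

import Mathlib

open scoped Classical

/-- A finite labeled directed graph: edges and a valuation of atomic
propositions (indexed by `ℕ`) at each vertex. -/
structure LGraph (V : Type) [Fintype V] where
  edge : V → V → Bool
  label : V → ℕ → Bool

mutual
/-- Formulas of the logic `K^#`. -/
inductive KForm : Type where
  | atom : ℕ → KForm
  | not : KForm → KForm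
  | or : KForm → KForm → KForm
  | ge0 : KExpr → KForm
/-- Expressions of the logic `K^#`. -/
inductive KExpr : Type where
  | const : ℤ → KExpr
  | ind : KForm → KExpr
  | count : KForm → KExpr
  | add : KExpr → KExpr → KExpr
  | scale : ℤ → KExpr → KExpr
end

mutual
/-- Truth of a `K^#` formula at a pointed graph. -/
def KForm.sat {V : Type} [Fintype V] (G : LGraph V) (u : V) : KForm → Bool
  | .atom p => G.label u p
  | .not φ => !(KForm.sat G u φ)
  | .or φ ψ => KForm.sat G u φ || KForm.sat G u ψ
  | .ge0 E => decide (0 ≤ KExpr.val G u E)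
/-- Value of a `K^#` expression at a pointed graph. -/
def KExpr.val {V : Type} [Fintype V] (G : LGraph V) (u : V) : KExpr → ℤ
  | .const c => c
  | .ind φ => if KForm.sat G u φ then 1 else 0
  | .count φ =>
      ((Finset.univ.filter (fun v => G.edge u v = true ∧ KForm.sat G v φ = true)).card : ℤ)
  | .add E₁ E₂ => KExpr.val G u E₁ + KExpr.val G u E₂
  | .scale c E => c * KExpr.val G u E
end

/-- Formulas of graded modal logic: `◇^{≥k} χ` means “at least `k` successors
satisfy `χ`”. -/
inductive GForm : Type where
  | atom : ℕ → GForm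
  | not : GForm → GForm
  | or : GForm → GForm → GForm
  | dia : ℕ → GForm → GForm

/-- Truth of a graded modal formula at a pointed graph. -/
def GForm.sat {V : Type} [Fintype V] (G : LGraph V) (u : V) : GForm → Bool
  | .atom p => G.label u p
  | .not χ => !(GForm.sat G u χ)
  | .or χ₁ χ₂ => GForm.sat G u χ₁ || GForm.sat G u χ₂
  | .dia k χ =>
      decide (k ≤ (Finset.univ.filter
        (fun v => G.edge u v = true ∧ GForm.sat G v χ = true)).card)

/-- The number of successors of `u` in `G` satisfying `ψ`. -/
def numSucc {V : Type} [Fintype V] (G : LGraph V) (u : V) (ψ : KForm) : ℕ :=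
  (Finset.univ.filter (fun v => G.edge u v = true ∧ KForm.sat G v ψ = true)).card

/-- The `K^#` formula `#p − #q ≥ 0`, with `p` the proposition `0` and `q` the
proposition `1`. -/
def cmpForm : KForm :=
  KForm.ge0 (KExpr.add (KExpr.count (KForm.atom 0))
    (KExpr.scale (-1) (KExpr.count (KForm.atom 1))))

/-! ### Auxiliary development -/

/-- Evaluation of a graded formula at a leaf (no successors) whose only label
is `p` (if `isP`) or `q` (otherwise). -/
def leafEval (isP : Bool) : GForm → Bool
  | .atom 0 => isP
  | .atom 1 => !isP
  | .atom _ => false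
  | .not χ => !(leafEval isP χ)
  | .or χ₁ χ₂ => leafEval isP χ₁ || leafEval isP χ₂
  | .dia k _ => decide (k ≤ 0)

/-- Evaluation of a graded formula at the root of the star graph with `a`
p-leaves and `b` q-leaves. -/
def rootEval (a b : ℕ) : GForm → Bool
  | .atom _ => false
  | .not χ => !(rootEval a b χ)
  | .or χ₁ χ₂ => rootEval a b χ₁ || rootEval a b χ₂
  | .dia k χ =>
      decide (k ≤ (if leafEval true χ then a else 0) +
        (if leafEval false χ then b else 0))

/-- Maximal grade occurring in a graded formula. -/
def maxGrade : GForm → ℕ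
  | .atom _ => 0
  | .not χ => maxGrade χ
  | .or χ₁ χ₂ => max (maxGrade χ₁) (maxGrade χ₂)
  | .dia k χ => max k (maxGrade χ)

/-- The star graph with root `0`, `a` leaves labeled `p` and `b` leaves
labeled `q`. -/
def myG (a b : ℕ) : LGraph (Fin (a + b + 1)) where
  edge u v := decide (u = 0 ∧ v ≠ 0)
  label v i := decide (v ≠ 0 ∧ ((i = 0 ∧ v.val ≤ a) ∨ (i = 1 ∧ a < v.val)))

lemma card_filter_fin (n : ℕ) (p : ℕ → Prop) [DecidablePred p] :
    (Finset.univ.filter (fun v : Fin n => p v.val)).card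
      = ((Finset.range n).filter p).card := by
  apply Finset.card_bij (fun v _ => v.val)
  · intro v hv
    simp only [Finset.mem_filter, Finset.mem_range, Finset.mem_univ, true_and] at *
    exact ⟨v.isLt, hv⟩
  · intro v₁ _ v₂ _ h
    exact Fin.val_injective h
  · intro m hm
    simp only [Finset.mem_filter, Finset.mem_range, Finset.mem_univ, true_and] at hm
    exact ⟨⟨m, hm.1⟩, by simpa using hm.2, rfl⟩

lemma leaf_sat (a b : ℕ) (χ : GForm) (v : Fin (a + b + 1)) (hv : v ≠ 0) :
    GForm.sat (myG a b) v χ = leafEval (decide (v.val ≤ a)) χ := by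
  induction χ with
  | atom p =>
      match p with
      | 0 => simp [GForm.sat, leafEval, myG, hv]
      | 1 =>
          simp only [GForm.sat, leafEval, myG]
          by_cases h : v.val ≤ a <;> simp [hv, h] <;> omega
      | (n+2) => simp [GForm.sat, leafEval, myG, hv]
  | not χ ih => simp [GForm.sat, leafEval, ih]
  | or χ₁ χ₂ ih₁ ih₂ => simp [GForm.sat, leafEval, ih₁, ih₂]
  | dia k χ ih =>
      have hempty : (Finset.univ.filter
          (fun w => (myG a b).edge v w = true ∧ GForm.sat (myG a b) w χ = true)) = ∅ := by
        apply Finset.filter_false_of_mem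
        intro w _
        simp [myG, hv]
      simp [GForm.sat, leafEval, hempty]

lemma card_root (a b : ℕ) (x y : Bool) :
    (Finset.univ.filter (fun v : Fin (a + b + 1) =>
        v ≠ 0 ∧ (if v.val ≤ a then x else y) = true)).card
      = (if x then a else 0) + (if y then b else 0) := by
  have h0 : ∀ v : Fin (a + b + 1), v ≠ 0 ↔ 0 < v.val := by
    intro v
    rw [Ne, Fin.ext_iff, Fin.val_zero]
    omega
  have := card_filter_fin (a + b + 1)
    (fun m => 0 < m ∧ (if m ≤ a then x else y) = true)
  rw [show (Finset.univ.filter (fun v : Fin (a + b + 1) =>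
      v ≠ 0 ∧ (if v.val ≤ a then x else y) = true))
      = (Finset.univ.filter (fun v : Fin (a + b + 1) =>
        0 < v.val ∧ (if v.val ≤ a then x else y) = true)) by
    apply Finset.filter_congr; intro v _; rw [h0]]
  rw [this]
  cases x <;> cases y <;> simp only [Bool.false_eq_true, and_false, if_false, if_true]
  · rw [show ((Finset.range (a+b+1)).filter
        (fun m => 0 < m ∧ (if m ≤ a then false else false) = true)) = ∅ by
      apply Finset.filter_false_of_mem; intro m _; by_cases h : m ≤ a <;> simp [h]]
    simp
  · rw [show ((Finset.range (a+b+1)).filter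
        (fun m => 0 < m ∧ (if m ≤ a then false else true) = true))
        = Finset.Ico (a+1) (a+b+1) by
      ext m
      simp only [Finset.mem_filter, Finset.mem_range, Finset.mem_Ico]
      by_cases h : m ≤ a <;> simp [h] <;> omega]
    simp [Nat.card_Ico]
  · rw [show ((Finset.range (a+b+1)).filter
        (fun m => 0 < m ∧ (if m ≤ a then true else false) = true))
        = Finset.Ico 1 (a+1) by
      ext m
      simp only [Finset.mem_filter, Finset.mem_range, Finset.mem_Ico]
      by_cases h : m ≤ a <;> simp [h] <;> omega]
    simp [Nat.card_Ico]
  · rw [show ((Finset.range (a+b+1)).filter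
        (fun m => 0 < m ∧ (if m ≤ a then true else true) = true))
        = Finset.Ico 1 (a+b+1) by
      ext m
      simp only [Finset.mem_filter, Finset.mem_range, Finset.mem_Ico]
      by_cases h : m ≤ a <;> simp [h] <;> omega]
    simp [Nat.card_Ico]

lemma root_sat (a b : ℕ) (χ : GForm) :
    GForm.sat (myG a b) 0 χ = rootEval a b χ := by
  induction χ with
  | atom p => simp [GForm.sat, rootEval, myG]
  | not χ ih => simp [GForm.sat, rootEval, ih]
  | or χ₁ χ₂ ih₁ ih₂ => simp [GForm.sat, rootEval, ih₁, ih₂]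
  | dia k χ _ =>
      have hset : (Finset.univ.filter
          (fun v => (myG a b).edge 0 v = true ∧ GForm.sat (myG a b) v χ = true))
          = (Finset.univ.filter (fun v : Fin (a + b + 1) =>
            v ≠ 0 ∧ (if v.val ≤ a then leafEval true χ else leafEval false χ) = true)) := by
        apply Finset.filter_congr
        intro v _
        constructor
        · rintro ⟨he, hs⟩
          have hv : v ≠ 0 := by
            simp only [myG, decide_eq_true_eq] at he; exact he.2
          refine ⟨hv, ?_⟩
          rw [leaf_sat a b χ v hv] at hs
          by_cases h : v.val ≤ a <;> simp [h] at hs ⊢ <;> simpa [h] using hs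
        · rintro ⟨hv, hs⟩
          refine ⟨by simp [myG, hv], ?_⟩
          rw [leaf_sat a b χ v hv]
          by_cases h : v.val ≤ a <;> simp [h] at hs ⊢ <;> simpa [h] using hs
      simp only [GForm.sat, rootEval, hset, card_root]

lemma rootEval_stable (K : ℕ) (χ : GForm) (hK : maxGrade χ ≤ K) :
    rootEval K K χ = rootEval K (K + 1) χ := by
  induction χ with
  | atom p => rfl
  | not χ ih => simp [maxGrade] at hK; simp [rootEval, ih hK]
  | or χ₁ χ₂ ih₁ ih₂ =>
      simp [maxGrade] at hK; simp [rootEval, ih₁ hK.1, ih₂ hK.2]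
  | dia k χ _ =>
      simp only [maxGrade, max_le_iff] at hK
      simp only [rootEval]
      cases hx : leafEval true χ <;> cases hy : leafEval false χ <;>
        simp only [Bool.false_eq_true, if_true, if_false] <;>
        first
          | rfl
          | (simp only [decide_eq_decide]; omega)

lemma numSucc_myG (a b : ℕ) :
    numSucc (myG a b) 0 (KForm.atom 0) = a ∧ numSucc (myG a b) 0 (KForm.atom 1) = b := by
  constructor
  · have hset : (Finset.univ.filter
        (fun v => (myG a b).edge 0 v = true ∧ KForm.sat (myG a b) v (KForm.atom 0) = true))
        = (Finset.univ.filter (fun v : Fin (a + b + 1) =>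
          v ≠ 0 ∧ (if v.val ≤ a then true else false) = true)) := by
      apply Finset.filter_congr
      intro v _
      simp only [KForm.sat, myG, decide_eq_true_eq]
      by_cases hv : v = (0 : Fin (a + b + 1)) <;> by_cases h : v.val ≤ a <;>
        first
          | (simp [hv, h]; omega)
          | simp [hv, h]
          | omega
    unfold numSucc
    rw [hset, card_root]
    simp
  · have hset : (Finset.univ.filter
        (fun v => (myG a b).edge 0 v = true ∧ KForm.sat (myG a b) v (KForm.atom 1) = true))
        = (Finset.univ.filter (fun v : Fin (a + b + 1) =>
          v ≠ 0 ∧ (if v.val ≤ a then false else true) = true)) := by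
      apply Finset.filter_congr
      intro v _
      simp only [KForm.sat, myG, decide_eq_true_eq]
      by_cases hv : v = (0 : Fin (a + b + 1)) <;> by_cases h : v.val ≤ a <;>
        first
          | (simp [hv, h]; omega)
          | simp [hv, h]
          | omega
    unfold numSucc
    rw [hset, card_root]
    simp

lemma cmp_iff {V : Type} [Fintype V] (G : LGraph V) (u : V) :
    KForm.sat G u cmpForm = true ↔
      numSucc G u (KForm.atom 1) ≤ numSucc G u (KForm.atom 0) := by
  simp only [cmpForm, KForm.sat.eq_4, decide_eq_true_eq]
  simp only [KExpr.val, numSucc]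
  omega

/-- `K^#` is strictly more expressive than graded modal logic: no graded modal
formula expresses, over finite pointed graphs, that the number of successors
satisfying `p` is at least the number of successors satisfying `q`; hence no graded
modal formula is equivalent to the `K^#` formula `#p − #q ≥ 0`. -/
theorem gml_cannot_compare_counts :
    (¬ ∃ χ : GForm,
      ∀ (n : ℕ) (G : LGraph (Fin n)) (u : Fin n),
        (GForm.sat G u χ = true ↔
          numSucc G u (KForm.atom 1) ≤ numSucc G u (KForm.atom 0))) ∧
    (¬ ∃ χ : GForm,
      ∀ (n : ℕ) (G : LGraph (Fin n)) (u : Fin n),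
        (GForm.sat G u χ = true ↔ KForm.sat G u cmpForm = true)) := by
  have part1 : ¬ ∃ χ : GForm,
      ∀ (n : ℕ) (G : LGraph (Fin n)) (u : Fin n),
        (GForm.sat G u χ = true ↔
          numSucc G u (KForm.atom 1) ≤ numSucc G u (KForm.atom 0)) := by
    rintro ⟨χ, h⟩
    set K := maxGrade χ with hKdef
    have h₁ := h (K + K + 1) (myG K K) 0
    have h₂ := h (K + (K + 1) + 1) (myG K (K + 1)) 0
    obtain ⟨hA0, hA1⟩ := numSucc_myG K K
    obtain ⟨hB0, hB1⟩ := numSucc_myG K (K + 1)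
    rw [hA0, hA1] at h₁
    rw [hB0, hB1] at h₂
    have hsatA : GForm.sat (myG K K) 0 χ = true := h₁.mpr le_rfl
    have hsatB : GForm.sat (myG K (K + 1)) 0 χ = true := by
      rw [root_sat, ← rootEval_stable K χ le_rfl, ← root_sat]
      exact hsatA
    have := h₂.mp hsatB
    omega
  refine ⟨part1, ?_⟩
  rintro ⟨χ, h⟩
  exact part1 ⟨χ, fun n G u => (h n G u).trans (cmp_iff G u)⟩
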